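/- Let r ≥ 1 be an integer and let u, v, w be distinct points of ℤ² with |v−w|² = 4r². If u does not lie on the circle of radius r through v and w (which is unique in this case), then the distance from u to this circle is at least 1/(5r). -/

import Mathlib

noncomputable def toPlane (p : ℤ × ℤ) : EuclideanSpace ℝ (Fin 2) :=
  WithLp.toLp 2 ![(p.1 : ℝ), (p.2 : ℝ)]

lemma aux_arith (d r e : ℝ) (hd0 : 0 ≤ d) (hr1 : 1 ≤ r)
    (he0 : 0 ≤ e) (hle : d - r ≤ e) (hkey : 1 ≤ e * (d + r)) :
    e ≥ 1 / (5 * r) := by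
  rw [ge_iff_le, div_le_iff₀ (by linarith)]
  by_contra hcon
  push_neg at hcon
  nlinarith [mul_nonneg he0 he0, mul_nonneg he0 (by linarith : (0:ℝ) ≤ r)]

/-- If `|v - w|² = 4r²` (so `[v, w]` is a diameter and the radius-`r` circle through
`v` and `w` is unique, centered at the midpoint) and the integer point `u` is off
this circle, then its distance to the circle is at least `1/(5r)`. -/
theorem stmt_5 (r : ℤ) (hr : 1 ≤ r) (u v w : ℤ × ℤ)
    (huv : u ≠ v) (huw : u ≠ w) (hvw : v ≠ w)
    (hdiam : dist (toPlane v) (toPlane w) ^ 2 = 4 * (r : ℝ) ^ 2)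
    (hoff : dist (toPlane u) ((1 / 2 : ℝ) • (toPlane v + toPlane w)) ≠ r) :
    |dist (toPlane u) ((1 / 2 : ℝ) • (toPlane v + toPlane w)) - r|
      ≥ 1 / (5 * (r : ℝ)) := by
  have hdist2 : ∀ x y : EuclideanSpace ℝ (Fin 2),
      dist x y ^ 2 = (x 0 - y 0) ^ 2 + (x 1 - y 1) ^ 2 := by
    intro x y
    rw [EuclideanSpace.dist_eq, Real.sq_sqrt (by positivity)]
    simp [Fin.sum_univ_two, Real.dist_eq, sq_abs]
  set c : EuclideanSpace ℝ (Fin 2) := (1 / 2 : ℝ) • (toPlane v + toPlane w) with hc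
  set d : ℝ := dist (toPlane u) c with hd
  have hd0 : 0 ≤ d := dist_nonneg
  have hr0 : (0:ℝ) < (r:ℝ) := by exact_mod_cast hr
  set A : ℤ := 2 * u.1 - v.1 - w.1 with hA
  set B : ℤ := 2 * u.2 - v.2 - w.2 with hB
  set P : ℤ := v.1 - w.1 with hP
  set Q : ℤ := v.2 - w.2 with hQ
  have hc0 : c 0 = (1/2 : ℝ) * ((v.1 : ℝ) + (w.1 : ℝ)) := by
    simp [hc, toPlane]; ring
  have hc1 : c 1 = (1/2 : ℝ) * ((v.2 : ℝ) + (w.2 : ℝ)) := by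
    simp [hc, toPlane]; ring
  have h1 : 4 * d ^ 2 = (A : ℝ) ^ 2 + (B : ℝ) ^ 2 := by
    rw [hd, hdist2, hc0, hc1]
    simp only [toPlane, Matrix.cons_val_zero, Matrix.cons_val_one, Matrix.head_cons,
      hA, hB]
    push_cast
    ring
  have h2 : 4 * (r : ℝ) ^ 2 = (P : ℝ) ^ 2 + (Q : ℝ) ^ 2 := by
    rw [← hdiam, hdist2]
    simp only [toPlane, Matrix.cons_val_zero, Matrix.cons_val_one, Matrix.head_cons,
      hP, hQ]
    push_cast
    ring
  have hne : A ^ 2 + B ^ 2 - (P ^ 2 + Q ^ 2) ≠ 0 := by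
    intro h
    have hZ : A ^ 2 + B ^ 2 = P ^ 2 + Q ^ 2 := by linarith
    have hR : (A : ℝ) ^ 2 + (B : ℝ) ^ 2 = (P : ℝ) ^ 2 + (Q : ℝ) ^ 2 := by
      exact_mod_cast congrArg (fun n : ℤ => (n : ℝ)) hZ
    have hdr : d ^ 2 = (r : ℝ) ^ 2 := by nlinarith [h1, h2]
    have : d = (r : ℝ) := by
      nlinarith [sq_nonneg (d - (r:ℝ)), sq_nonneg (d + (r:ℝ))]
    exact hoff this
  have hdvd : (4 : ℤ) ∣ A ^ 2 + B ^ 2 - (P ^ 2 + Q ^ 2) := by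
    refine ⟨(u.1 - v.1) * (u.1 - w.1) + (u.2 - v.2) * (u.2 - w.2), ?_⟩
    simp only [hA, hB, hP, hQ]; ring
  have h4 : (4 : ℤ) ≤ |A ^ 2 + B ^ 2 - (P ^ 2 + Q ^ 2)| :=
    Int.le_of_dvd (abs_pos.mpr hne) ((dvd_abs _ _).mpr hdvd)
  have h4' : (4 : ℝ) ≤ |4 * d ^ 2 - 4 * (r : ℝ) ^ 2| := by
    have heq : |((A ^ 2 + B ^ 2 - (P ^ 2 + Q ^ 2) : ℤ) : ℝ)| =
        |4 * d ^ 2 - 4 * (r : ℝ) ^ 2| := by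
      rw [show ((A ^ 2 + B ^ 2 - (P ^ 2 + Q ^ 2) : ℤ) : ℝ)
          = ((A:ℝ)^2 + (B:ℝ)^2) - ((P:ℝ)^2 + (Q:ℝ)^2) by push_cast; ring, ← h1, ← h2]
    rw [← heq]
    exact_mod_cast h4
  have hkey : 1 ≤ |d - (r:ℝ)| * (d + (r:ℝ)) := by
    have heq2 : |4 * d ^ 2 - 4 * (r:ℝ) ^ 2| = 4 * (|d - (r:ℝ)| * (d + (r:ℝ))) := by
      rw [show 4 * d ^ 2 - 4 * (r:ℝ) ^ 2 = (d - r) * (4 * (d + r)) by ring,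
        abs_mul, abs_of_nonneg (by linarith : (0:ℝ) ≤ 4 * (d + (r:ℝ)))]
      ring
    rw [heq2] at h4'
    linarith
  exact aux_arith d (r:ℝ) _ hd0 (by exact_mod_cast hr) (abs_nonneg _) (le_abs_self _) hkey
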